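/- Let Ỹ_α, Z̃_{α,i} be an orthonormal basis (with respect to the trace inner product) of a subspace of symmetric matrices, and suppose there exists a positive definite matrix Y = Σ_α y_α Ỹ_α ≻ 0 orthogonal to every Z̃_{α,i}. Then the set { I − Σ_{α,i} z_{α,i} Z̃_{α,i} : the matrix is positive semidefinite } is bounded in the space of symmetric matrices. -/

import Mathlib

attribute [local instance] Matrix.normedAddCommGroup

open Matrix

attribute [local instance] Matrix.normedAddCommGroup

lemma psd_diag_nonneg {n : Type*} [Fintype n] [DecidableEq n] {M : Matrix n n ℝ}
    (h : M.PosSemidef) (i : n) : 0 ≤ M i i := by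
  have := h.dotProduct_mulVec_nonneg (Pi.single i 1)
  simpa [dotProduct, Matrix.mulVec, Pi.single_apply, Finset.sum_ite_eq] using this

lemma psd_entry_le_trace {n : Type*} [Fintype n] [DecidableEq n] {M : Matrix n n ℝ}
    (h : M.PosSemidef) (i j : n) : |M i j| ≤ M.trace := by
  have hdiag := psd_diag_nonneg h
  have hdle : ∀ p : n, M p p ≤ M.trace := fun p =>
    Finset.single_le_sum (f := fun q => M q q) (fun q _ => hdiag q) (Finset.mem_univ p)
  rcases eq_or_ne i j with rfl | hij
  · rw [abs_of_nonneg (hdiag i)]; exact hdle i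
  · have hsym : M j i = M i j := by
      have := h.1
      calc M j i = Mᴴ i j := by simp [Matrix.conjTranspose_apply]
        _ = M i j := by rw [this]
    have key : ∀ t : ℝ, 0 ≤ M i i + t * M i j + (t * M i j + t * t * M j j) := by
      intro t
      have hq := h.dotProduct_mulVec_nonneg (Pi.single i 1 + Pi.single j t)
      rw [star_trivial] at hq
      simp only [Matrix.mulVec_add, dotProduct_add, add_dotProduct,
        Matrix.mulVec_single, Pi.smul_apply, op_smul_eq_mul, Matrix.col_apply, dotProduct, Pi.add_apply, Pi.single_apply, mul_add, add_mul,
        mul_ite, ite_mul, mul_one, mul_zero, one_mul, zero_mul, Finset.sum_add_distrib,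
        Finset.sum_ite_eq, Finset.sum_ite_eq', Finset.mem_univ, if_true, hij,
        hij.symm, if_false] at hq
      rw [hsym] at hq
      ring_nf at hq ⊢
      linarith
    have hsum : M i i + M j j ≤ M.trace := by
      have : ∑ p ∈ ({i, j} : Finset n), M p p ≤ M.trace :=
        Finset.sum_le_sum_of_subset_of_nonneg (Finset.subset_univ _) fun p _ _ => hdiag p
      rwa [Finset.sum_pair hij] at this
    rcases le_or_gt 0 (M i j) with hpos | hneg
    · have := key (-1); rw [abs_of_nonneg hpos]; nlinarith
    · have := key 1; rw [abs_of_neg hneg]; nlinarith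

lemma psd_trace_mul_nonneg {n : Type*} [Fintype n] [DecidableEq n] {A B : Matrix n n ℝ}
    (hA : A.PosSemidef) (hB : B.PosSemidef) : 0 ≤ (A * B).trace := by
  obtain ⟨C, hC⟩ := by open scoped MatrixOrder in exact CStarAlgebra.nonneg_iff_eq_star_mul_self.mp hB.nonneg
  rw [star_eq_conjTranspose] at hC; subst hC
  have : (A * (Cᴴ * C)).trace = (C * A * Cᴴ).trace := by
    rw [← Matrix.mul_assoc, Matrix.trace_mul_cycle]
  rw [this]
  exact Finset.sum_nonneg fun i _ => psd_diag_nonneg (hA.mul_mul_conjTranspose_same C) i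

lemma posdef_exists_smul_le {n : Type*} [Fintype n] [DecidableEq n] [Nonempty n]
    {M : Matrix n n ℝ} (h : M.PosDef) :
    ∃ c : ℝ, 0 < c ∧ (M - c • 1).PosSemidef := by
  have hH := h.isHermitian
  set U : Matrix n n ℝ := (hH.eigenvectorUnitary : Matrix n n ℝ) with hU
  refine ⟨Finset.univ.inf' Finset.univ_nonempty hH.eigenvalues, ?_, ?_⟩
  · obtain ⟨i, -, hi⟩ := Finset.exists_mem_eq_inf' Finset.univ_nonempty hH.eigenvalues
    rw [hi]; exact h.eigenvalues_pos i
  · set c := Finset.univ.inf' Finset.univ_nonempty hH.eigenvalues with hc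
    have hu : U * star U = (1 : Matrix n n ℝ) := hH.eigenvectorUnitary.2.2
    have hd : Matrix.diagonal (RCLike.ofReal ∘ hH.eigenvalues) =
        Matrix.diagonal (fun i => hH.eigenvalues i - c) + c • (1 : Matrix n n ℝ) := by
      ext i j
      rcases eq_or_ne i j with rfl | hij
      · simp [Matrix.diagonal, Matrix.one_apply]
      · simp [Matrix.diagonal_apply_ne _ hij, Matrix.one_apply, hij]
    have hM : M = U * Matrix.diagonal (fun i => hH.eigenvalues i - c) * star U
        + c • (1 : Matrix n n ℝ) := by
      conv_lhs => rw [hH.spectral_theorem]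
      rw [hd, Unitary.conjStarAlgAut_apply, Matrix.mul_add, Matrix.add_mul, Matrix.mul_smul, Matrix.smul_mul,
        Matrix.mul_one, hu]
    have key : M - c • (1 : Matrix n n ℝ)
        = U * Matrix.diagonal (fun i => hH.eigenvalues i - c) * star U := by
      conv_lhs => rw [hM]
      rw [add_sub_cancel_right]
    rw [key, Matrix.star_eq_conjTranspose]
    refine (Matrix.posSemidef_diagonal_iff.mpr fun i => ?_).mul_mul_conjTranspose_same _
    simpa using Finset.inf'_le _ (Finset.mem_univ i)

/-- Let `{Ỹ_α} ∪ {Z̃_k}` be an orthonormal family (w.r.t. the trace inner product) of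
symmetric matrices, and suppose there is a positive definite matrix `Y = Σ y_α Ỹ_α ≻ 0`
(which is then orthogonal to every `Z̃_k`).  Then the set
`{ I − Σ_k z_k Z̃_k : positive semidefinite }` is bounded in the space of symmetric
matrices. -/
theorem stmt13 {N : ℕ} {ι κ : Type} [Fintype ι] [Fintype κ] [DecidableEq ι] [DecidableEq κ]
    (Y : ι → Matrix (Fin N) (Fin N) ℝ) (Z : κ → Matrix (Fin N) (Fin N) ℝ)
    (hYsym : ∀ a, (Y a).IsSymm) (hZsym : ∀ k, (Z k).IsSymm)
    (horthY : ∀ a a', (Y a * Y a').trace = if a = a' then 1 else 0)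
    (horthZ : ∀ k k', (Z k * Z k').trace = if k = k' then 1 else 0)
    (horthYZ : ∀ a k, (Y a * Z k).trace = 0)
    (y : ι → ℝ) (hY : (∑ a, y a • Y a).PosDef) :
    Bornology.IsBounded {A : Matrix (Fin N) (Fin N) ℝ |
      ∃ z : κ → ℝ, A = 1 - ∑ k, z k • Z k ∧ A.PosSemidef} := by
  rcases Nat.eq_zero_or_pos N with hN | hN
  · subst hN
    rw [isBounded_iff_forall_norm_le]
    exact ⟨0, fun A _ => (Matrix.norm_le_iff le_rfl).mpr fun i _ => i.elim0⟩
  haveI : Nonempty (Fin N) := ⟨⟨0, hN⟩⟩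
  set Y0 : Matrix (Fin N) (Fin N) ℝ := ∑ a, y a • Y a with hY0
  obtain ⟨c, hc, hsub⟩ := posdef_exists_smul_le hY
  -- Y0 is orthogonal to each Z k
  have hYZ : ∀ k, (Y0 * Z k).trace = 0 := by
    intro k
    rw [hY0, Finset.sum_mul, Matrix.trace_sum]
    simp only [Matrix.smul_mul, Matrix.trace_smul]
    simp [horthYZ]
  rw [isBounded_iff_forall_norm_le]
  refine ⟨max (Y0.trace / c) 0, ?_⟩
  rintro A ⟨z, rfl, hA⟩
  set A : Matrix (Fin N) (Fin N) ℝ := 1 - ∑ k, z k • Z k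
  -- trace(Y0 * A) = trace Y0
  have htr : (Y0 * A).trace = Y0.trace := by
    rw [show A = 1 - ∑ k, z k • Z k from rfl, Matrix.mul_sub, Matrix.mul_one,
      Matrix.trace_sub, Matrix.mul_sum, Matrix.trace_sum]
    simp only [Matrix.mul_smul, Matrix.trace_smul]
    simp [hYZ]
  have h1 : 0 ≤ ((Y0 - c • 1) * A).trace := psd_trace_mul_nonneg hsub hA
  have h2 : ((Y0 - c • 1) * A).trace = Y0.trace - c * A.trace := by
    rw [Matrix.sub_mul, Matrix.trace_sub, htr, Matrix.smul_mul, Matrix.one_mul,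
      Matrix.trace_smul, smul_eq_mul]
  have hAtr : A.trace ≤ Y0.trace / c := by
    rw [le_div_iff₀ hc]; nlinarith
  refine (Matrix.norm_le_iff (le_max_right _ _)).mpr fun i j => ?_
  calc ‖A i j‖ = |A i j| := rfl
    _ ≤ A.trace := psd_entry_le_trace hA i j
    _ ≤ Y0.trace / c := hAtr
    _ ≤ max (Y0.trace / c) 0 := le_max_left _ _
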